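/- Let Φ be a real number with Φ² = Φ + 1 and let w = (w₁, …, wₙ) be a nonempty word of integers. Then the (2,1) entry (row 2, column 1) of M(Φ, w) equals E·Φ + G, where E = Σ_{s ≪₃ w} χ(n − |s| − 1) · F_{|s|} · m_s and G = Σ_{s ≪₃ w} χ(n − |s| − 1) · F_{|s|−1} · m_s, the sums ranging over all subwords s of w with s ≪₃ w. -/

import Mathlib

open Matrix

noncomputable section

/-- The matrix `S = !![0, -1; 1, 0]` over `ℝ`. -/
def S : Matrix (Fin 2) (Fin 2) ℝ := !![0, -1; 1, 0]

/-- The matrix `T(λ) = !![1, λ; 0, 1]` over `ℝ`. -/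
def T (lam : ℝ) : Matrix (Fin 2) (Fin 2) ℝ := !![1, lam; 0, 1]

/-- For a nonempty word `w = (w₁, …, wₙ)` of integers,
`M lam w = T(λ)^{w₁} · S · T(λ)^{w₂} · S · ⋯ · S · T(λ)^{wₙ}`. -/
def M (lam : ℝ) : List ℤ → Matrix (Fin 2) (Fin 2) ℝ
  | [] => 1
  | a :: t => T lam ^ a * (t.map fun b => S * T lam ^ b).prod

/-- The 4-periodic function with `χ(0) = 0, χ(1) = 1, χ(2) = 0, χ(3) = -1`
(the nontrivial Dirichlet character mod 4, extended to all integers). -/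
def chi (m : ℤ) : ℤ := if m % 4 = 1 then 1 else if m % 4 = 3 then -1 else 0

/-- The Fibonacci numbers, extended so that `F₋₁ = 1` (the only negative index used). -/
def fibz (m : ℤ) : ℤ := if m < 0 then 1 else (Nat.fib m.toNat : ℤ)

/-- A subword of `(w₁, …, wₙ)` is encoded by its set `J` of (0-based) positions;
the 1-based indices `j₁ < ⋯ < j_m` are the sorted elements of `J` plus one.
`ll3 J` says `jᵢ ≡ i - 1 (mod 2)`, i.e. `s ≪₃ w`, for all `i` (1-based), stated here in 0-based form. -/
def ll3 {n : ℕ} (J : Finset (Fin n)) : Prop :=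
  ∀ i : ℕ, ∀ hi : i < (J.sort (· ≤ ·)).length,
    ((J.sort (· ≤ ·)).get ⟨i, hi⟩).val % 2 = (i + 1) % 2

instance {n : ℕ} : DecidablePred (ll3 (n := n)) := fun _ =>
  Nat.decidableBallLT _ _

/-! ### Auxiliary lemmas -/

lemma chi_add_two (k : ℤ) : chi (k + 2) = - chi k := by unfold chi; split_ifs <;> omega

lemma chi_even {k : ℤ} (h : k % 2 = 0) : chi k = 0 := by unfold chi; split_ifs <;> omega

lemma fibz_succ (m : ℕ) : fibz ((m : ℤ) + 1) = fibz m + fibz ((m : ℤ) - 1) := by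
  cases m with
  | zero => norm_num [fibz]
  | succ k =>
      have h1 : ((k:ℤ) + 1 + 1).toNat = k + 2 := by omega
      have h2 : ((k:ℤ) + 1).toNat = k + 1 := by omega
      have h3 : ((k:ℤ) + 1 - 1).toNat = k := by omega
      push_cast
      rw [fibz, fibz, fibz, if_neg (by omega), if_neg (by omega), if_neg (by omega), h1, h2, h3]
      push_cast [Nat.fib_add_two]
      ring

lemma T_det (lam : ℝ) : (T lam).det = 1 := by simp [T]

lemma T_inv (lam : ℝ) : (T lam)⁻¹ = !![1, -lam; 0, 1] := by
  apply Matrix.inv_eq_right_inv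
  simp [T, Matrix.mul_fin_two, Matrix.one_fin_two]

lemma T_zpow (lam : ℝ) (a : ℤ) : T lam ^ a = !![1, (a:ℝ) * lam; 0, 1] := by
  induction a using Int.induction_on with
  | zero => simp [Matrix.one_fin_two]
  | succ k ih =>
      rw [Matrix.zpow_add_one (by rw [T_det]; exact isUnit_one), ih]
      simp only [T, Matrix.mul_fin_two]
      norm_num
      push_cast; ring
  | pred k ih =>
      rw [show (-(k:ℤ) - 1) = (-(k:ℤ)) - 1 by ring,
        Matrix.zpow_sub_one (by rw [T_det]; exact isUnit_one), ih, T_inv]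
      simp only [Matrix.mul_fin_two]
      norm_num
      push_cast; ring

lemma S_mul_T_zpow (lam : ℝ) (a : ℤ) : S * T lam ^ a = !![0, -1; 1, (a:ℝ) * lam] := by
  rw [T_zpow]; simp [S, Matrix.mul_fin_two]

lemma M_append (lam : ℝ) (b : ℤ) (t : List ℤ) (a : ℤ) :
    M lam (b :: t ++ [a]) = M lam (b :: t) * (S * T lam ^ a) := by
  simp [M, List.map_append, List.prod_append, mul_assoc]

/-! ### Sorting lemmas -/

def Pl (l : List ℕ) : Prop := ∀ i (h : i < l.length), l[i] % 2 = (i + 1) % 2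

lemma ll3_iff {n : ℕ} (J : Finset (Fin n)) :
    ll3 J ↔ Pl ((J.sort (· ≤ ·)).map Fin.val) := by
  unfold ll3 Pl
  simp [List.get_eq_getElem]

lemma Pl_append (l : List ℕ) (x : ℕ) :
    Pl (l ++ [x]) ↔ Pl l ∧ x % 2 = (l.length + 1) % 2 := by
  constructor
  · intro h
    refine ⟨fun i hi => ?_, ?_⟩
    · have := h i (by simp; omega)
      rwa [List.getElem_append_left hi] at this
    · have := h l.length (by simp)
      rw [List.getElem_append_right (le_refl _)] at this
      simpa using this
  · rintro ⟨h1, h2⟩ i hi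
    rcases lt_or_ge i l.length with h | h
    · rw [List.getElem_append_left h]; exact h1 i h
    · have : i = l.length := by simp at hi; omega
      subst this
      rw [List.getElem_append_right (le_refl _)]
      simpa using h2

lemma sort_map {n : ℕ} (J : Finset (Fin n)) :
    (J.map Fin.castSuccEmb).sort (· ≤ ·) = (J.sort (· ≤ ·)).map Fin.castSucc := by
  refine (fun hp h1 h2 => List.Perm.eq_of_pairwise' h1 h2 hp) ?_ (Finset.pairwise_sort _ _) ?_
  · rw [← Multiset.coe_eq_coe]
    simp only [← Multiset.map_coe, Finset.sort_eq, Finset.map_val]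
    rfl
  · rw [List.pairwise_map]
    exact List.Pairwise.imp (fun h => Fin.castSucc_le_castSucc_iff.mpr h)
      (Finset.pairwise_sort _ _)

lemma sort_insert_last {n : ℕ} (s : Finset (Fin (n + 1))) (h : Fin.last n ∉ s) :
    (insert (Fin.last n) s).sort (· ≤ ·) = s.sort (· ≤ ·) ++ [Fin.last n] := by
  refine (fun hp h1 h2 => List.Perm.eq_of_pairwise' h1 h2 hp) ?_ (Finset.pairwise_sort _ _) ?_
  · rw [← Multiset.coe_eq_coe]
    rw [Finset.sort_eq, ← Multiset.coe_add, Finset.sort_eq, Finset.insert_val_of_notMem h]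
    rw [Multiset.coe_singleton, add_comm s.val {Fin.last n}, Multiset.singleton_add]
  · rw [List.pairwise_append]
    refine ⟨Finset.pairwise_sort _ _, by simp, fun a _ b hb => ?_⟩
    simp at hb; subst hb; exact Fin.le_last a

lemma last_not_mem_map {n : ℕ} (J : Finset (Fin n)) :
    Fin.last n ∉ J.map Fin.castSuccEmb := by
  simp only [Finset.mem_map, Fin.coe_castSuccEmb]
  rintro ⟨x, -, hx⟩
  exact absurd hx (Fin.castSucc_lt_last x).ne

lemma ll3_map {n : ℕ} (J : Finset (Fin n)) :
    ll3 (J.map Fin.castSuccEmb) ↔ ll3 J := by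
  rw [ll3_iff, ll3_iff, sort_map, List.map_map]
  have : (Fin.val ∘ Fin.castSucc : Fin n → ℕ) = Fin.val := by
    funext x; simp
  rw [this]

lemma ll3_insert {n : ℕ} (J : Finset (Fin n)) :
    ll3 (insert (Fin.last n) (J.map Fin.castSuccEmb)) ↔
      (ll3 J ∧ n % 2 = (J.card + 1) % 2) := by
  rw [ll3_iff, ll3_iff, sort_insert_last _ (last_not_mem_map J), List.map_append,
    sort_map, List.map_map]
  have : (Fin.val ∘ Fin.castSucc : Fin n → ℕ) = Fin.val := by funext x; simp
  rw [this, List.map_singleton, Pl_append]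
  simp [Finset.length_sort]

/-! ### The combinatorial sums -/

def cs {n : ℕ} (c : ℕ → ℤ) (w : Fin n → ℤ) : ℤ :=
  ∑ J ∈ Finset.univ.filter (fun J : Finset (Fin n) => ll3 J), c J.card * ∏ j ∈ J, w j

lemma my_powerset_map {α β : Type*} [DecidableEq α] [DecidableEq β] (f : α ↪ β)
    (s : Finset α) :
    (s.map f).powerset = s.powerset.map (Finset.mapEmbedding f).toEmbedding := by
  ext t
  simp only [Finset.mem_powerset, Finset.mem_map, RelEmbedding.coe_toEmbedding,
    Finset.mapEmbedding_apply]
  constructor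
  · intro h
    rw [Finset.map_eq_image] at h
    obtain ⟨u, hu, hut⟩ := Finset.subset_image_iff.mp h
    exact ⟨u, hu, by rw [Finset.map_eq_image, hut]⟩
  · rintro ⟨u, hu, rfl⟩
    exact Finset.map_subset_map.mpr hu

lemma cs_snoc {n : ℕ} (c : ℕ → ℤ) (w : Fin n → ℤ) (a : ℤ) :
    cs c (Fin.snoc w a) =
      cs c w + a * cs (fun m => if n % 2 = (m + 1) % 2 then c (m + 1) else 0) w := by
  unfold cs
  rw [Finset.sum_filter, Finset.sum_filter, Finset.sum_filter, Finset.mul_sum]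
  rw [← Finset.powerset_univ, Fin.univ_castSuccEmb, Finset.cons_eq_insert,
    Finset.sum_powerset_insert (last_not_mem_map _),
    my_powerset_map, Finset.sum_map, Finset.sum_map, Finset.powerset_univ]
  congr 1
  · apply Finset.sum_congr rfl
    intro J _
    rw [RelEmbedding.coe_toEmbedding, Finset.mapEmbedding_apply]
    simp only [ll3_map, Finset.card_map, Finset.prod_map, Fin.coe_castSuccEmb,
      Fin.snoc_castSucc]
  · apply Finset.sum_congr rfl
    intro J _
    rw [RelEmbedding.coe_toEmbedding, Finset.mapEmbedding_apply]
    simp only [ll3_insert, Finset.card_insert_of_notMem (last_not_mem_map J),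
      Finset.prod_insert (last_not_mem_map J), Finset.card_map, Finset.prod_map,
      Fin.coe_castSuccEmb, Fin.snoc_castSucc, Fin.snoc_last]
    split_ifs <;> (try ring) <;> (exfalso; tauto)

lemma cs_congr {n : ℕ} {c c' : ℕ → ℤ} (w : Fin n → ℤ) (h : ∀ m, c m = c' m) :
    cs c w = cs c' w := by
  congr 1; funext m; exact h m

lemma cs_add {n : ℕ} (c c' : ℕ → ℤ) (w : Fin n → ℤ) :
    cs (fun m => c m + c' m) w = cs c w + cs c' w := by
  unfold cs
  rw [← Finset.sum_add_distrib]
  exact Finset.sum_congr rfl fun J _ => by ring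

lemma cs_neg {n : ℕ} (c : ℕ → ℤ) (w : Fin n → ℤ) :
    cs (fun m => -(c m)) w = -(cs c w) := by
  unfold cs
  rw [← Finset.sum_neg_distrib]
  exact Finset.sum_congr rfl fun J _ => by ring

lemma cs_zero {n : ℕ} (w : Fin n → ℤ) : cs (fun _ => (0:ℤ)) w = 0 := by
  unfold cs
  exact Finset.sum_eq_zero fun J _ => by ring

lemma ll3_empty {n : ℕ} : ll3 (∅ : Finset (Fin n)) := by
  intro i hi
  simp at hi

lemma cs_one (c : ℕ → ℤ) (w : Fin 1 → ℤ) : cs c w = c 0 := by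
  have hmem : ∀ J : Finset (Fin 1), ll3 J ↔ J = ∅ := by
    intro J
    rcases Finset.subset_singleton_iff.mp
        (show J ⊆ {0} by intro x _; simp [Fin.eq_zero x]) with rfl | rfl
    · exact ⟨fun _ => rfl, fun _ => ll3_empty⟩
    · constructor
      · intro h
        exfalso
        have h1 := h 0 (by rw [Finset.sort_singleton]; simp)
        simp [Finset.sort_singleton] at h1
      · intro h
        exact absurd h (by simp)
  have h : (Finset.univ.filter (fun J : Finset (Fin 1) => ll3 J)) = {∅} := by
    ext J
    simp [hmem]
  unfold cs
  rw [h, Finset.sum_singleton]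
  simp

/-! ### The four recursions -/

lemma recE {n : ℕ} (w : Fin n → ℤ) (a : ℤ) :
    cs (fun m => chi (((n:ℤ) + 1) - m - 1) * fibz m) (Fin.snoc w a)
      = cs (fun m => chi ((n:ℤ) - m) * fibz m) w := by
  rw [cs_congr (c' := fun m => chi ((n:ℤ) - m) * fibz m) _
    (fun m => by rw [show ((n:ℤ) + 1) - m - 1 = (n:ℤ) - m by ring]), cs_snoc]
  have h2 : cs (fun m => if n % 2 = (m + 1) % 2
      then chi ((n:ℤ) - ((m+1:ℕ):ℤ)) * fibz ((m+1:ℕ):ℤ) else 0) w = 0 := by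
    rw [cs_congr (c' := fun _ => 0) _ ?_, cs_zero]
    intro m
    split_ifs with h
    · rw [chi_even (by push_cast; omega), zero_mul]
    · rfl
  rw [h2]; ring

lemma recG {n : ℕ} (w : Fin n → ℤ) (a : ℤ) :
    cs (fun m => chi (((n:ℤ) + 1) - m - 1) * fibz ((m:ℤ) - 1)) (Fin.snoc w a)
      = cs (fun m => chi ((n:ℤ) - m) * fibz ((m:ℤ) - 1)) w := by
  rw [cs_congr (c' := fun m => chi ((n:ℤ) - m) * fibz ((m:ℤ) - 1)) _
    (fun m => by rw [show ((n:ℤ) + 1) - m - 1 = (n:ℤ) - m by ring]), cs_snoc]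
  have h2 : cs (fun m => if n % 2 = (m + 1) % 2
      then chi ((n:ℤ) - ((m+1:ℕ):ℤ)) * fibz (((m+1:ℕ):ℤ) - 1) else 0) w = 0 := by
    rw [cs_congr (c' := fun _ => 0) _ ?_, cs_zero]
    intro m
    split_ifs with h
    · rw [chi_even (by push_cast; omega), zero_mul]
    · rfl
  rw [h2]; ring

lemma recA {n : ℕ} (w : Fin n → ℤ) (a : ℤ) :
    cs (fun m => chi (((n:ℤ) + 1) - m) * fibz m) (Fin.snoc w a)
      = a * (cs (fun m => chi ((n:ℤ) - m) * fibz m) w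
          + cs (fun m => chi ((n:ℤ) - m) * fibz ((m:ℤ) - 1)) w)
        - cs (fun m => chi ((n:ℤ) - m - 1) * fibz m) w := by
  rw [cs_snoc]
  have h1 : cs (fun m => chi (((n:ℤ) + 1) - m) * fibz m) w
      = -(cs (fun m => chi ((n:ℤ) - m - 1) * fibz m) w) := by
    rw [← cs_neg]
    apply cs_congr
    intro m
    rw [show ((n:ℤ) + 1) - m = ((n:ℤ) - m - 1) + 2 by ring, chi_add_two]
    ring
  have h2 : cs (fun m => if n % 2 = (m + 1) % 2
        then chi (((n:ℤ) + 1) - (((m:ℕ)+1:ℤ))) * fibz ((m:ℕ)+1:ℤ) else 0) w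
      = cs (fun m => chi ((n:ℤ) - m) * fibz m) w
        + cs (fun m => chi ((n:ℤ) - m) * fibz ((m:ℤ) - 1)) w := by
    rw [← cs_add]
    apply cs_congr
    intro m
    split_ifs with h
    · push_cast
      rw [show ((n:ℤ) + 1) - ((m:ℤ)+1) = (n:ℤ) - m by ring, fibz_succ]
      ring
    · rw [chi_even (by omega)]
      ring
  rw [show (fun m => if n % 2 = (m + 1) % 2
      then chi (((n:ℤ) + 1) - ↑(m+1)) * fibz ↑(m+1) else 0)
    = (fun m => if n % 2 = (m + 1) % 2
      then chi (((n:ℤ) + 1) - ((m:ℕ)+1:ℤ)) * fibz ((m:ℕ)+1:ℤ) else 0) by push_cast; rfl]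
  rw [h1, h2]
  ring

lemma recB {n : ℕ} (w : Fin n → ℤ) (a : ℤ) :
    cs (fun m => chi (((n:ℤ) + 1) - m) * fibz ((m:ℤ) - 1)) (Fin.snoc w a)
      = a * cs (fun m => chi ((n:ℤ) - m) * fibz m) w
        - cs (fun m => chi ((n:ℤ) - m - 1) * fibz ((m:ℤ) - 1)) w := by
  rw [cs_snoc]
  have h1 : cs (fun m => chi (((n:ℤ) + 1) - m) * fibz ((m:ℤ) - 1)) w
      = -(cs (fun m => chi ((n:ℤ) - m - 1) * fibz ((m:ℤ) - 1)) w) := by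
    rw [← cs_neg]
    apply cs_congr
    intro m
    rw [show ((n:ℤ) + 1) - m = ((n:ℤ) - m - 1) + 2 by ring, chi_add_two]
    ring
  have h2 : cs (fun m => if n % 2 = (m + 1) % 2
        then chi (((n:ℤ) + 1) - (((m:ℕ)+1:ℤ))) * fibz (((m:ℕ)+1:ℤ) - 1) else 0) w
      = cs (fun m => chi ((n:ℤ) - m) * fibz m) w := by
    apply cs_congr
    intro m
    rw [show ((n:ℤ) + 1) - ((m:ℤ)+1) = (n:ℤ) - m by ring,
      show ((m:ℤ)+1) - 1 = (m:ℤ) by ring]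
    split_ifs with h
    · rfl
    · rw [chi_even (by omega)]
      ring
  rw [show (fun m => if n % 2 = (m + 1) % 2
      then chi (((n:ℤ) + 1) - ↑(m+1)) * fibz (↑(m+1) - 1) else 0)
    = (fun m => if n % 2 = (m + 1) % 2
      then chi (((n:ℤ) + 1) - ((m:ℕ)+1:ℤ)) * fibz (((m:ℕ)+1:ℤ) - 1) else 0) by push_cast; rfl]
  rw [h1, h2]
  ring

lemma key (Φ : ℝ) (hΦ : Φ ^ 2 = Φ + 1) :
    ∀ n : ℕ, 1 ≤ n → ∀ w : Fin n → ℤ,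
      M Φ (List.ofFn w) 1 0
          = (cs (fun m => chi ((n:ℤ) - m - 1) * fibz m) w : ℝ) * Φ
            + (cs (fun m => chi ((n:ℤ) - m - 1) * fibz ((m:ℤ) - 1)) w : ℝ) ∧
      M Φ (List.ofFn w) 1 1
          = (cs (fun m => chi ((n:ℤ) - m) * fibz m) w : ℝ) * Φ
            + (cs (fun m => chi ((n:ℤ) - m) * fibz ((m:ℤ) - 1)) w : ℝ) := by
  refine Nat.le_induction ?_ ?_
  · intro w
    have hM : M Φ (List.ofFn w) = T Φ ^ (w 0) := by
      simp [List.ofFn_succ, M]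
    rw [hM, T_zpow, cs_one, cs_one, cs_one, cs_one]
    norm_num [chi, fibz]
  · intro n hn ih w
    obtain ⟨v, hv⟩ : ∃ v : Fin n → ℤ, v = fun i => w i.castSucc := ⟨_, rfl⟩
    obtain ⟨a, ha⟩ : ∃ a : ℤ, a = w (Fin.last n) := ⟨_, rfl⟩
    have hsnoc : w = Fin.snoc v a := by
      funext i
      cases i using Fin.lastCases with
      | last => simp [ha, Fin.snoc_last]
      | cast j => simp [hv, Fin.snoc_castSucc]
    have hw : List.ofFn w = List.ofFn v ++ [a] := by
      rw [List.ofFn_succ', List.concat_eq_append, hv, ha]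
    have hM : M Φ (List.ofFn w) = M Φ (List.ofFn v) * !![0, -1; 1, (a:ℝ) * Φ] := by
      obtain ⟨b, t, hbt⟩ : ∃ b t, List.ofFn v = b :: t := by
        cases n with
        | zero => omega
        | succ k => exact ⟨_, _, List.ofFn_succ (f := v)⟩
      rw [hw, hbt, M_append, ← hbt, S_mul_T_zpow]
    obtain ⟨ih1, ih2⟩ := ih v
    have e10 : M Φ (List.ofFn w) 1 0 = M Φ (List.ofFn v) 1 1 := by
      rw [hM, Matrix.mul_apply, Fin.sum_univ_two]
      simp
    have e11 : M Φ (List.ofFn w) 1 1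
        = -(M Φ (List.ofFn v) 1 0) + M Φ (List.ofFn v) 1 1 * ((a:ℝ) * Φ) := by
      rw [hM, Matrix.mul_apply, Fin.sum_univ_two]
      simp
      try ring
    constructor
    · rw [e10, hsnoc]
      simp only [Nat.cast_add, Nat.cast_one]
      rw [recE, recG]
      exact ih2
    · rw [e11, hsnoc, ih1, ih2]
      simp only [Nat.cast_add, Nat.cast_one]
      rw [recA, recB]
      push_cast
      linear_combination ((a:ℝ) * (cs (fun m => chi ((n:ℤ) - m) * fibz m) v : ℝ)) * hΦ

theorem stmt8 (Φ : ℝ) (hΦ : Φ ^ 2 = Φ + 1) (n : ℕ) (hn : 0 < n) (w : Fin n → ℤ) :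
    M Φ (List.ofFn w) 1 0 =
      ((∑ J ∈ Finset.univ.filter (fun J : Finset (Fin n) => ll3 J),
          chi ((n : ℤ) - J.card - 1) * fibz (J.card : ℤ) * ∏ j ∈ J, w j : ℤ) : ℝ) * Φ +
      ((∑ J ∈ Finset.univ.filter (fun J : Finset (Fin n) => ll3 J),
          chi ((n : ℤ) - J.card - 1) * fibz ((J.card : ℤ) - 1) * ∏ j ∈ J, w j : ℤ) : ℝ) := by
  exact (key Φ hΦ n hn w).1
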